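/- arXiv:2204.05466 — 2 statements merged into one kernel-verified Lean document; each statement's English description precedes it below -/
import Mathlib

section
/- The independent entropy-regularized NPG update guarantees, for every t ≥ 0, Φ_τ(π^(t+1)) − Φ_τ(π^(t)) ≥ (1/η − 2Φ_max − τ) · J(π^(t+1), π^(t)). -/
open Finset

noncomputable section

/-- A probability distribution on a finite action set. -/
def IsDist {A : Type*} [Fintype A] (p : A → ℝ) : Prop :=
  (∀ a, 0 ≤ p a) ∧ ∑ a, p a = 1

/-- Shannon entropy of a distribution. -/
def entropy {A : Type*} [Fintype A] (p : A → ℝ) : ℝ :=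
  -∑ a, p a * Real.log (p a)

/-- Kullback-Leibler divergence on a finite set. -/
def KLdiv {A : Type*} [Fintype A] (p q : A → ℝ) : ℝ :=
  ∑ a, p a * (Real.log (p a) - Real.log (q a))

/-- Jeffrey divergence: the symmetrized KL divergence. -/
def Jdiv {A : Type*} [Fintype A] (p q : A → ℝ) : ℝ :=
  KLdiv p q + KLdiv q p

/-- Joint product distribution induced by a product policy. -/
def jointPmf {N : ℕ} {A : Type*} [Fintype A] (π : Fin N → A → ℝ) :
    (Fin N → A) → ℝ :=
  fun a => ∏ i, π i (a i)

/-- Expectation of `f` under the product policy `π`. -/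
def expVal {N : ℕ} {A : Type*} [Fintype A] (π : Fin N → A → ℝ)
    (f : (Fin N → A) → ℝ) : ℝ :=
  ∑ a, jointPmf π a * f a

/-- Point mass at action `a`. -/
def pmfOf {A : Type*} [DecidableEq A] (a : A) : A → ℝ :=
  fun b => if b = a then 1 else 0

/-- Marginalized utility `r_i^π(a) = E_{a_{-i} ∼ π_{-i}}[u_i(a, a_{-i})]`. -/
def margU {N : ℕ} {A : Type*} [Fintype A] [DecidableEq A]
    (u : Fin N → (Fin N → A) → ℝ) (π : Fin N → A → ℝ) (i : Fin N) (a : A) : ℝ :=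
  expVal (Function.update π i (pmfOf a)) (u i)

/-- Entropy-regularized utility `u_{i,τ}(π) = u_i(π) + τ H(π_i)`. -/
def uReg {N : ℕ} {A : Type*} [Fintype A] (u : Fin N → (Fin N → A) → ℝ) (τ : ℝ)
    (i : Fin N) (π : Fin N → A → ℝ) : ℝ :=
  expVal π (u i) + τ * entropy (π i)

/-- `QRE-gap_τ(π)`. -/
def QREgap {N : ℕ} {A : Type*} [Fintype A] [DecidableEq A]
    (u : Fin N → (Fin N → A) → ℝ) (τ : ℝ) (π : Fin N → A → ℝ) : ℝ :=
  sSup {x | ∃ (i : Fin N) (p : A → ℝ), IsDist p ∧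
    x = uReg u τ i (Function.update π i p) - uReg u τ i π}

/-- `NE-gap(π)`. -/
def NEgap {N : ℕ} {A : Type*} [Fintype A] [DecidableEq A]
    (u : Fin N → (Fin N → A) → ℝ) (π : Fin N → A → ℝ) : ℝ :=
  sSup {x | ∃ (i : Fin N) (p : A → ℝ), IsDist p ∧
    x = expVal (Function.update π i p) (u i) - expVal π (u i)}

/-- Entropy-regularized potential `Φ_τ(π) = Φ(π) + τ ∑_i H(π_i)`. -/
def regPot {N : ℕ} {A : Type*} [Fintype A] (Φ : (Fin N → A) → ℝ) (τ : ℝ)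
    (π : Fin N → A → ℝ) : ℝ :=
  expVal π Φ + τ * ∑ i, entropy (π i)

/-- `Φ` is a potential function for the game with utilities `u`. -/
def IsPotential {N : ℕ} {A : Type*} [Fintype A] [DecidableEq A]
    (u : Fin N → (Fin N → A) → ℝ) (Φ : (Fin N → A) → ℝ) : Prop :=
  ∀ (i : Fin N) (a : Fin N → A) (a' : A),
    u i a - u i (Function.update a i a') = Φ a - Φ (Function.update a i a')

/-- The independent entropy-regularized NPG update rule. -/
def NPGstep {N : ℕ} {A : Type*} [Fintype A] [DecidableEq A]
    (u : Fin N → (Fin N → A) → ℝ) (τ η : ℝ) (π : ℕ → Fin N → A → ℝ) : Prop :=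
  ∀ t i a, π (t+1) i a =
    π t i a ^ (1 - η * τ) * Real.exp (η * margU u (π t) i a) /
      ∑ a', π t i a' ^ (1 - η * τ) * Real.exp (η * margU u (π t) i a')

/-- Best-response policy `π_i^⋆(a) ∝ exp(r_i^π(a)/τ)`. -/
def bestResp {N : ℕ} {A : Type*} [Fintype A] [DecidableEq A]
    (u : Fin N → (Fin N → A) → ℝ) (τ : ℝ) (π : Fin N → A → ℝ) (i : Fin N) :
    A → ℝ :=
  fun a => Real.exp (margU u π i a / τ) / ∑ a', Real.exp (margU u π i a' / τ)


set_option linter.unusedSectionVars false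

namespace NPGaux

variable {N : ℕ} {A : Type*} [Fintype A] [DecidableEq A]

lemma sum_prod_pi (g : Fin N → A → ℝ) :
    ∑ a : Fin N → A, ∏ i, g i (a i) = ∏ i, ∑ x, g i x := by
  rw [Finset.prod_univ_sum, Fintype.piFinset_univ]

lemma jointPmf_nonneg {p : Fin N → A → ℝ} (hp : ∀ j x, 0 ≤ p j x) (a : Fin N → A) :
    0 ≤ jointPmf p a :=
  Finset.prod_nonneg fun j _ => hp j (a j)

lemma sum_jointPmf {p : Fin N → A → ℝ} (hp1 : ∀ j, ∑ x, p j x = 1) :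
    ∑ a, jointPmf p a = 1 := by
  unfold jointPmf
  rw [sum_prod_pi]
  simp [hp1]

lemma jointPmf_update (p : Fin N → A → ℝ) (i : Fin N) (w : A → ℝ) (a : Fin N → A) :
    jointPmf (Function.update p i w) a = w (a i) * ∏ j ∈ univ.erase i, p j (a j) := by
  unfold jointPmf
  rw [← Finset.mul_prod_erase univ _ (mem_univ i), Function.update_self]
  congr 1
  exact Finset.prod_congr rfl fun j hj => by
    rw [Function.update_of_ne (Finset.ne_of_mem_erase hj)]

lemma jointPmf_split (p : Fin N → A → ℝ) (i : Fin N) (a : Fin N → A) :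
    jointPmf p a = p i (a i) * ∏ j ∈ univ.erase i, p j (a j) := by
  unfold jointPmf
  rw [← Finset.mul_prod_erase univ _ (mem_univ i)]

lemma pmfOf_nonneg (b x : A) : 0 ≤ pmfOf b x := by
  unfold pmfOf; split <;> norm_num

lemma sum_pmfOf (b : A) : ∑ x, pmfOf b x = 1 := by
  simp [pmfOf]

lemma sum_joint_mul (p : Fin N → A → ℝ) (i : Fin N) (g : A → ℝ) (f : (Fin N → A) → ℝ) :
    ∑ a : Fin N → A, jointPmf p a * (g (a i) * f a)
      = ∑ b, p i b * g b * expVal (Function.update p i (pmfOf b)) f := by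
  unfold expVal
  simp only [jointPmf_update, Finset.mul_sum]
  rw [Finset.sum_comm]
  refine Finset.sum_congr rfl fun a _ => ?_
  rw [jointPmf_split p i a]
  simp only [pmfOf, mul_ite, ite_mul, mul_one, one_mul, mul_zero, zero_mul]
  rw [Finset.sum_ite_eq univ (a i) (fun b => p i b * g b * ((∏ j ∈ univ.erase i, p j (a j)) * f a))]
  simp only [mem_univ, if_true]
  ring

lemma expVal_update_pmfOf_const (p : Fin N → A → ℝ) (i : Fin N) (f : (Fin N → A) → ℝ)
    (hf : ∀ a x, f (Function.update a i x) = f a) (b c : A) :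
    expVal (Function.update p i (pmfOf b)) f = expVal (Function.update p i (pmfOf c)) f := by
  unfold expVal
  simp only [jointPmf_update]
  refine Fintype.sum_equiv
    (Equiv.piCongrRight fun j => if j = i then Equiv.swap b c else Equiv.refl A) _ _ ?_
  intro a
  have hcoord : ∀ j, (Equiv.piCongrRight fun j => if j = i then Equiv.swap b c else Equiv.refl A) a j
      = if j = i then Equiv.swap b c (a j) else a j := by
    intro j
    simp only [Equiv.piCongrRight_apply, Pi.map_apply]
    split <;> simp
  have hupd : (Equiv.piCongrRight fun j => if j = i then Equiv.swap b c else Equiv.refl A) a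
      = Function.update a i (Equiv.swap b c (a i)) := by
    funext j
    rw [hcoord j]
    by_cases h : j = i
    · subst h; simp
    · rw [if_neg h, Function.update_of_ne h]
  have h1 : pmfOf c (Equiv.swap b c (a i)) = pmfOf b (a i) := by
    have hiff : ((Equiv.swap b c) (a i) = c) ↔ (a i = b) := by
      rw [Equiv.swap_apply_eq_iff, Equiv.swap_apply_right]
    unfold pmfOf
    simp only [hiff]
  have h2 : ∏ j ∈ univ.erase i, p j (Function.update a i (Equiv.swap b c (a i)) j)
      = ∏ j ∈ univ.erase i, p j (a j) :=
    Finset.prod_congr rfl fun j hj => by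
      rw [Function.update_of_ne (Finset.ne_of_mem_erase hj)]
  simp only [hupd, Function.update_self, h1, h2, hf a]

lemma expVal_nonneg {p : Fin N → A → ℝ} (hp : ∀ j x, 0 ≤ p j x)
    {f : (Fin N → A) → ℝ} (hf : ∀ a, 0 ≤ f a) : 0 ≤ expVal p f :=
  Finset.sum_nonneg fun a _ => mul_nonneg (jointPmf_nonneg hp a) (hf a)

lemma expVal_le {p : Fin N → A → ℝ} (hp0 : ∀ j x, 0 ≤ p j x) (hp1 : ∀ j, ∑ x, p j x = 1)
    {f : (Fin N → A) → ℝ} {M : ℝ} (hf : ∀ a, f a ≤ M) : expVal p f ≤ M := by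
  calc expVal p f ≤ ∑ a, jointPmf p a * M :=
        Finset.sum_le_sum fun a _ => mul_le_mul_of_nonneg_left (hf a) (jointPmf_nonneg hp0 a)
    _ = M := by rw [← Finset.sum_mul, sum_jointPmf hp1, one_mul]

lemma update_nonneg {p : Fin N → A → ℝ} (hp : ∀ j x, 0 ≤ p j x) (i : Fin N) (b : A) :
    ∀ j x, 0 ≤ Function.update p i (pmfOf b) j x := by
  intro j x
  by_cases h : j = i
  · subst h; rw [Function.update_self]; exact pmfOf_nonneg b x
  · rw [Function.update_of_ne h]; exact hp j x

lemma update_sum_one {p : Fin N → A → ℝ} (hp1 : ∀ j, ∑ x, p j x = 1) (i : Fin N) (b : A) :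
    ∀ j, ∑ x, Function.update p i (pmfOf b) j x = 1 := by
  intro j
  by_cases h : j = i
  · subst h; rw [Function.update_self]; exact sum_pmfOf b
  · rw [Function.update_of_ne h]; exact hp1 j

lemma mul_log_sub_le {x y : ℝ} (hx : 0 < x) (hy : 0 < y) :
    x * (Real.log y - Real.log x) ≤ y - x := by
  have h := Real.log_le_sub_one_of_pos (show 0 < y / x by positivity)
  rw [Real.log_div hy.ne' hx.ne'] at h
  have h2 := mul_le_mul_of_nonneg_left h hx.le
  calc x * (Real.log y - Real.log x) ≤ x * (y / x - 1) := h2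
    _ = y - x := by field_simp

lemma KLdiv_nonneg' {p q : A → ℝ} (hp : ∀ x, 0 < p x) (hq : ∀ x, 0 < q x)
    (hp1 : ∑ x, p x = 1) (hq1 : ∑ x, q x = 1) : 0 ≤ KLdiv p q := by
  unfold KLdiv
  have key : ∀ x ∈ (univ : Finset A), p x - q x ≤ p x * (Real.log (p x) - Real.log (q x)) := by
    intro x _
    have h := mul_log_sub_le (hp x) (hq x)
    nlinarith [h]
  calc (0:ℝ) = ∑ x, (p x - q x) := by rw [Finset.sum_sub_distrib, hp1, hq1, sub_self]
    _ ≤ _ := Finset.sum_le_sum key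

lemma expVal_one {p : Fin N → A → ℝ} (hp1 : ∀ j, ∑ x, p j x = 1) :
    expVal p (fun _ => (1:ℝ)) = 1 := by
  unfold expVal
  simp only [mul_one]
  exact sum_jointPmf hp1

lemma KLdiv_joint {p q : Fin N → A → ℝ}
    (hp : ∀ j x, 0 < p j x) (hq : ∀ j x, 0 < q j x)
    (hp1 : ∀ j, ∑ x, p j x = 1) (hq1 : ∀ j, ∑ x, q j x = 1) :
    KLdiv (jointPmf q) (jointPmf p) = ∑ i, KLdiv (q i) (p i) := by
  unfold KLdiv
  have hlog : ∀ a : Fin N → A, Real.log (jointPmf q a) - Real.log (jointPmf p a)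
      = ∑ i, (Real.log (q i (a i)) - Real.log (p i (a i))) := by
    intro a
    unfold jointPmf
    rw [Real.log_prod (fun j _ => (hq j (a j)).ne'),
      Real.log_prod (fun j _ => (hp j (a j)).ne'), ← Finset.sum_sub_distrib]
  calc ∑ a, jointPmf q a * (Real.log (jointPmf q a) - Real.log (jointPmf p a))
      = ∑ a : Fin N → A, ∑ i, jointPmf q a
          * ((Real.log (q i (a i)) - Real.log (p i (a i))) * (fun _ => (1:ℝ)) a) := by
        refine Finset.sum_congr rfl fun a _ => ?_
        rw [hlog, Finset.mul_sum]
        simp only [mul_one]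
    _ = ∑ i, ∑ a : Fin N → A, jointPmf q a
          * ((fun x => Real.log (q i x) - Real.log (p i x)) (a i) * (fun _ => (1:ℝ)) a) :=
        Finset.sum_comm
    _ = ∑ i, ∑ b, q i b * (Real.log (q i b) - Real.log (p i b))
          * expVal (Function.update q i (pmfOf b)) (fun _ => (1:ℝ)) :=
        Finset.sum_congr rfl fun i _ => sum_joint_mul q i (fun x => Real.log (q i x) - Real.log (p i x)) (fun _ => (1:ℝ))
    _ = ∑ i, ∑ b, q i b * (Real.log (q i b) - Real.log (p i b)) := by
        refine Finset.sum_congr rfl fun i _ => Finset.sum_congr rfl fun b _ => ?_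
        rw [expVal_one (update_sum_one hq1 i b), mul_one]

end NPGaux

open NPGaux in
/-- Performance improvement of the regularized potential under independent NPG. -/
theorem potential_improvement_phimax
    {N : ℕ} (hN : 0 < N) {A : Type*} [Fintype A] [DecidableEq A] [Nonempty A]
    (u : Fin N → (Fin N → A) → ℝ) (hu : ∀ i a, 0 ≤ u i a ∧ u i a ≤ 1)
    (Φ : (Fin N → A) → ℝ) (Φmax : ℝ) (hΦ : ∀ a, 0 ≤ Φ a ∧ Φ a ≤ Φmax)
    (hpot : IsPotential u Φ)
    (τ η : ℝ) (hτ : 0 < τ) (hη : 0 < η)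
    (π : ℕ → Fin N → A → ℝ)
    (hdist : ∀ i, IsDist (π 0 i)) (hpos : ∀ i a, 0 < π 0 i a)
    (hstep : NPGstep u τ η π) :
    ∀ t : ℕ,
      regPot Φ τ (π (t + 1)) - regPot Φ τ (π t) ≥
        (1 / η - 2 * Φmax - τ) * Jdiv (jointPmf (π (t + 1))) (jointPmf (π t)) := by
  classical
  -- invariants: positivity and normalization at all times
  have hbig : ∀ s : ℕ, (∀ i a, 0 < π s i a) ∧ (∀ i, ∑ a, π s i a = 1) := by
    intro s
    induction s with
    | zero => exact ⟨hpos, fun i => (hdist i).2⟩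
    | succ s ih =>
      have hZ : ∀ i, 0 < ∑ a', π s i a' ^ (1 - η * τ) * Real.exp (η * margU u (π s) i a') := by
        intro i
        exact Finset.sum_pos
          (fun a _ => mul_pos (Real.rpow_pos_of_pos (ih.1 i a) _) (Real.exp_pos _))
          Finset.univ_nonempty
      refine ⟨fun i a => ?_, fun i => ?_⟩
      · rw [hstep s i a]
        exact div_pos (mul_pos (Real.rpow_pos_of_pos (ih.1 i a) _) (Real.exp_pos _)) (hZ i)
      · rw [Finset.sum_congr rfl fun a _ => hstep s i a, ← Finset.sum_div, div_self (hZ i).ne']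
  intro t
  obtain ⟨hp, hp1⟩ := hbig t
  obtain ⟨hq, hq1⟩ := hbig (t + 1)
  set p : Fin N → A → ℝ := π t with hpdef
  set q : Fin N → A → ℝ := π (t + 1) with hqdef
  have hΦmax : 0 ≤ Φmax := le_trans (hΦ (Classical.arbitrary _)).1 (hΦ (Classical.arbitrary _)).2
  -- the exact identity from the update rule
  have hZ : ∀ i, 0 < ∑ a', p i a' ^ (1 - η * τ) * Real.exp (η * margU u p i a') := by
    intro i
    exact Finset.sum_pos
      (fun a _ => mul_pos (Real.rpow_pos_of_pos (hp i a) _) (Real.exp_pos _))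
      Finset.univ_nonempty
  have hmarg : ∀ i b, η * margU u p i b
      = (Real.log (q i b) - Real.log (p i b)) + η * τ * Real.log (p i b)
        + Real.log (∑ a', p i a' ^ (1 - η * τ) * Real.exp (η * margU u p i a')) := by
    intro i b
    have h1 : q i b = p i b ^ (1 - η * τ) * Real.exp (η * margU u p i b) /
        ∑ a', p i a' ^ (1 - η * τ) * Real.exp (η * margU u p i a') := hstep t i b
    have h2 : Real.log (q i b)
        = (1 - η * τ) * Real.log (p i b) + η * margU u p i b
          - Real.log (∑ a', p i a' ^ (1 - η * τ) * Real.exp (η * margU u p i a')) := by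
      rw [h1, Real.log_div (mul_pos (Real.rpow_pos_of_pos (hp i b) _) (Real.exp_pos _)).ne'
        (hZ i).ne', Real.log_mul (Real.rpow_pos_of_pos (hp i b) _).ne' (Real.exp_pos _).ne',
        Real.log_rpow (hp i b), Real.log_exp]
    linarith [h2]
  -- marginalized potential
  set φ : Fin N → A → ℝ := fun i b => expVal (Function.update p i (pmfOf b)) Φ with hφdef
  have hφ0 : ∀ i b, 0 ≤ φ i b := fun i b =>
    expVal_nonneg (update_nonneg (fun j x => (hp j x).le) i b) (fun a => (hΦ a).1)
  have hφM : ∀ i b, φ i b ≤ Φmax := fun i b =>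
    expVal_le (update_nonneg (fun j x => (hp j x).le) i b) (update_sum_one hp1 i b)
      (fun a => (hΦ a).2)
  -- Step A : key positivity inequality
  have hA : expVal p Φ
      + ∑ i, ∑ b, p i b * (Real.log (q i b) - Real.log (p i b)) * φ i b ≤ expVal q Φ := by
    have hpt : ∀ a : Fin N → A,
        jointPmf p a * Φ a * (1 + ∑ i, (Real.log (q i (a i)) - Real.log (p i (a i))))
          ≤ jointPmf q a * Φ a := by
      intro a
      have hqp : jointPmf q a
          = jointPmf p a * Real.exp (∑ i, (Real.log (q i (a i)) - Real.log (p i (a i)))) := by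
        unfold jointPmf
        rw [Real.exp_sum, ← Finset.prod_mul_distrib]
        refine Finset.prod_congr rfl fun j _ => ?_
        rw [Real.exp_sub, Real.exp_log (hq j (a j)), Real.exp_log (hp j (a j)),
          mul_comm, div_mul_cancel₀ _ (hp j (a j)).ne']
      rw [hqp]
      have h1 : (1 + ∑ i, (Real.log (q i (a i)) - Real.log (p i (a i))))
          ≤ Real.exp (∑ i, (Real.log (q i (a i)) - Real.log (p i (a i)))) := by
        have := Real.add_one_le_exp (∑ i, (Real.log (q i (a i)) - Real.log (p i (a i))))
        linarith
      have h0 : 0 ≤ jointPmf p a * Φ a :=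
        mul_nonneg (jointPmf_nonneg (fun j x => (hp j x).le) a) (hΦ a).1
      nlinarith [mul_le_mul_of_nonneg_left h1 h0]
    calc expVal p Φ + ∑ i, ∑ b, p i b * (Real.log (q i b) - Real.log (p i b)) * φ i b
        = ∑ a, jointPmf p a * Φ a * (1 + ∑ i, (Real.log (q i (a i)) - Real.log (p i (a i)))) := by
          have hswap : ∑ i, ∑ b, p i b * (Real.log (q i b) - Real.log (p i b)) * φ i b
              = ∑ a : Fin N → A, jointPmf p a *
                  ((∑ i, (Real.log (q i (a i)) - Real.log (p i (a i)))) * Φ a) := by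
            rw [Finset.sum_congr rfl fun i (_ : i ∈ univ) =>
              (sum_joint_mul p i (fun x => Real.log (q i x) - Real.log (p i x)) Φ).symm]
            rw [Finset.sum_comm]
            refine Finset.sum_congr rfl fun a _ => ?_
            rw [Finset.sum_mul, Finset.mul_sum]
          rw [hswap]
          unfold expVal
          rw [← Finset.sum_add_distrib]
          refine Finset.sum_congr rfl fun a _ => by ring
      _ ≤ ∑ a, jointPmf q a * Φ a := Finset.sum_le_sum fun a _ => hpt a
      _ = expVal q Φ := rfl
  -- Step B : from p·ℓ to (q - p), paying Φmax · KL(p‖q)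
  have hB : ∀ i, ∑ b, (q i b - p i b) * φ i b - Φmax * KLdiv (p i) (q i)
      ≤ ∑ b, p i b * (Real.log (q i b) - Real.log (p i b)) * φ i b := by
    intro i
    have e1 : ∀ b ∈ (univ : Finset A),
        (q i b - p i b) * φ i b
          + (p i b * (Real.log (q i b) - Real.log (p i b)) - (q i b - p i b)) * Φmax
        ≤ p i b * (Real.log (q i b) - Real.log (p i b)) * φ i b := by
      intro b _
      have hc : p i b * (Real.log (q i b) - Real.log (p i b)) - (q i b - p i b) ≤ 0 := by
        have := mul_log_sub_le (hp i b) (hq i b); linarith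
      nlinarith [mul_le_mul_of_nonpos_left (hφM i b) hc]
    have h0 : ∑ b, (q i b - p i b) = 0 := by
      rw [Finset.sum_sub_distrib, hq1 i, hp1 i, sub_self]
    have e3 : ∑ b, (p i b * (Real.log (q i b) - Real.log (p i b)) - (q i b - p i b)) * Φmax
        = -(Φmax * KLdiv (p i) (q i)) := by
      calc ∑ b, (p i b * (Real.log (q i b) - Real.log (p i b)) - (q i b - p i b)) * Φmax
          = ∑ b, ((p i b * (Real.log (q i b) - Real.log (p i b))) * Φmax
              - (q i b - p i b) * Φmax) :=
            Finset.sum_congr rfl fun b _ => by ring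
        _ = ∑ b, (p i b * (Real.log (q i b) - Real.log (p i b))) * Φmax := by
            have h0' : ∑ b, (q i b - p i b) * Φmax = 0 := by
              rw [← Finset.sum_mul, h0, zero_mul]
            rw [Finset.sum_sub_distrib, h0', sub_zero]
        _ = -(Φmax * KLdiv (p i) (q i)) := by
            unfold KLdiv
            rw [Finset.mul_sum, ← Finset.sum_neg_distrib]
            exact Finset.sum_congr rfl fun b _ => by ring
    calc ∑ b, (q i b - p i b) * φ i b - Φmax * KLdiv (p i) (q i)
        = ∑ b, ((q i b - p i b) * φ i b
            + (p i b * (Real.log (q i b) - Real.log (p i b)) - (q i b - p i b)) * Φmax) := by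
          rw [Finset.sum_add_distrib, e3]; ring
      _ ≤ _ := Finset.sum_le_sum e1
  -- Step C : the potential property lets us replace φ by margU
  have hC : ∀ i, ∑ b, (q i b - p i b) * φ i b = ∑ b, (q i b - p i b) * margU u p i b := by
    intro i
    have hinv : ∀ (a : Fin N → A) (x : A),
        u i (Function.update a i x) - Φ (Function.update a i x) = u i a - Φ a := by
      intro a x
      have := hpot i a x
      linarith
    have hdiff : ∀ b, margU u p i b - φ i b
        = expVal (Function.update p i (pmfOf b)) (fun a => u i a - Φ a) := by
      intro b
      simp only [hφdef, margU, expVal]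
      rw [← Finset.sum_sub_distrib]
      exact Finset.sum_congr rfl fun a _ => by ring
    have hconst : ∀ b, margU u p i b - φ i b
        = margU u p i (Classical.arbitrary A) - φ i (Classical.arbitrary A) := by
      intro b
      rw [hdiff, hdiff]
      exact expVal_update_pmfOf_const p i _ hinv b (Classical.arbitrary A)
    have h0 : ∑ b, (q i b - p i b) = 0 := by
      rw [Finset.sum_sub_distrib, hq1 i, hp1 i, sub_self]
    have : ∑ b, (q i b - p i b) * margU u p i b - ∑ b, (q i b - p i b) * φ i b
        = (margU u p i (Classical.arbitrary A) - φ i (Classical.arbitrary A))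
            * ∑ b, (q i b - p i b) := by
      rw [← Finset.sum_sub_distrib, Finset.mul_sum]
      refine Finset.sum_congr rfl fun b _ => ?_
      have hb := hconst b
      linear_combination (q i b - p i b) * hb
    rw [h0, mul_zero] at this
    linarith
  -- Step D : dynamics identity
  have hD : ∀ i, η * (∑ b, (q i b - p i b) * margU u p i b)
      = Jdiv (q i) (p i)
        + η * τ * (entropy (p i) - entropy (q i) - KLdiv (q i) (p i)) := by
    intro i
    have h0 : ∑ b, (q i b - p i b) = 0 := by
      rw [Finset.sum_sub_distrib, hq1 i, hp1 i, sub_self]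
    have e1 : η * (∑ b, (q i b - p i b) * margU u p i b)
        = ∑ b, ((q i b - p i b) * (Real.log (q i b) - Real.log (p i b))
            + η * τ * ((q i b - p i b) * Real.log (p i b))
            + (q i b - p i b) * Real.log (∑ a', p i a' ^ (1 - η * τ)
                * Real.exp (η * margU u p i a'))) := by
      rw [Finset.mul_sum]
      refine Finset.sum_congr rfl fun b _ => ?_
      linear_combination (q i b - p i b) * (hmarg i b)
    have e2 : ∑ b, (q i b - p i b) * (Real.log (q i b) - Real.log (p i b))
        = Jdiv (q i) (p i) := by
      unfold Jdiv KLdiv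
      rw [← Finset.sum_add_distrib]
      exact Finset.sum_congr rfl fun b _ => by ring
    have e3 : ∑ b, (q i b - p i b) * Real.log (p i b)
        = entropy (p i) - entropy (q i) - KLdiv (q i) (p i) := by
      have s1 : KLdiv (q i) (p i)
          = ∑ b, q i b * Real.log (q i b) - ∑ b, q i b * Real.log (p i b) := by
        unfold KLdiv
        rw [← Finset.sum_sub_distrib]
        exact Finset.sum_congr rfl fun b _ => by ring
      have s2 : ∑ b, (q i b - p i b) * Real.log (p i b)
          = ∑ b, q i b * Real.log (p i b) - ∑ b, p i b * Real.log (p i b) := by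
        rw [← Finset.sum_sub_distrib]
        exact Finset.sum_congr rfl fun b _ => by ring
      unfold entropy
      rw [s2, s1]
      ring
    rw [e1, Finset.sum_add_distrib, Finset.sum_add_distrib, ← Finset.sum_mul, h0, zero_mul,
      add_zero, e2]
    rw [show ∑ b, η * τ * ((q i b - p i b) * Real.log (p i b))
        = η * τ * ∑ b, (q i b - p i b) * Real.log (p i b) from (Finset.mul_sum _ _ _).symm, e3]
  -- KL/J positivity facts
  have hKLqp : ∀ i, 0 ≤ KLdiv (q i) (p i) := fun i =>
    KLdiv_nonneg' (hq i) (hp i) (hq1 i) (hp1 i)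
  have hKLpq : ∀ i, 0 ≤ KLdiv (p i) (q i) := fun i =>
    KLdiv_nonneg' (hp i) (hq i) (hp1 i) (hq1 i)
  -- decomposition of the joint Jeffrey divergence
  have hJ : Jdiv (jointPmf q) (jointPmf p) = ∑ i, Jdiv (q i) (p i) := by
    unfold Jdiv
    rw [KLdiv_joint hp hq hp1 hq1, KLdiv_joint hq hp hq1 hp1, ← Finset.sum_add_distrib]
  -- final assembly
  set Jt : ℝ := ∑ i, Jdiv (q i) (p i) with hJt
  have hJti : ∀ i, 0 ≤ Jdiv (q i) (p i) := by
    intro i; unfold Jdiv; have := hKLqp i; have := hKLpq i; linarith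
  have hJt0 : 0 ≤ Jt := Finset.sum_nonneg fun i _ => hJti i
  -- per-i inequality : η·τ·KL(q‖p) + η·Φmax·KL(p‖q) ≤ (η·τ + 2·η·Φmax)·J_i
  have hper : ∀ i ∈ (univ : Finset (Fin N)),
      η * τ * KLdiv (q i) (p i) + η * Φmax * KLdiv (p i) (q i)
        ≤ (η * τ + 2 * η * Φmax) * Jdiv (q i) (p i) := by
    intro i _
    unfold Jdiv
    nlinarith [hKLqp i, hKLpq i, mul_nonneg (mul_nonneg hη.le hτ.le) (hKLpq i),
      mul_nonneg (mul_nonneg hη.le hΦmax) (hKLqp i),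
      mul_nonneg (mul_nonneg hη.le hΦmax) (hKLpq i)]
  have h3 : η * τ * ∑ i, KLdiv (q i) (p i) + η * Φmax * ∑ i, KLdiv (p i) (q i)
      ≤ (η * τ + 2 * η * Φmax) * Jt := by
    have := Finset.sum_le_sum hper
    rw [Finset.sum_add_distrib] at this
    simpa only [← Finset.mul_sum] using this
  -- (1) : expVal q Φ - expVal p Φ ≥ ∑ SA - Φmax * Kpq
  have h1 : (∑ i, ∑ b, (q i b - p i b) * margU u p i b)
      - Φmax * ∑ i, KLdiv (p i) (q i) ≤ expVal q Φ - expVal p Φ := by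
    have hsum : ∑ i, (∑ b, (q i b - p i b) * margU u p i b - Φmax * KLdiv (p i) (q i))
        ≤ ∑ i, ∑ b, p i b * (Real.log (q i b) - Real.log (p i b)) * φ i b :=
      Finset.sum_le_sum fun i _ => by
        rw [← hC i]; exact hB i
    rw [Finset.sum_sub_distrib, ← Finset.mul_sum] at hsum
    linarith [hA, hsum]
  -- (2) : dynamics summed
  have h2 : η * ∑ i, ∑ b, (q i b - p i b) * margU u p i b
      = Jt + η * τ * ((∑ i, entropy (p i)) - (∑ i, entropy (q i))
          - ∑ i, KLdiv (q i) (p i)) := by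
    rw [Finset.mul_sum, Finset.sum_congr rfl fun i _ => hD i, Finset.sum_add_distrib]
    rw [show (∑ i, η * τ * (entropy (p i) - entropy (q i) - KLdiv (q i) (p i)))
        = η * τ * ∑ i, (entropy (p i) - entropy (q i) - KLdiv (q i) (p i)) from
      (Finset.mul_sum _ _ _).symm]
    rw [Finset.sum_sub_distrib, Finset.sum_sub_distrib]
  -- put everything together (multiplied by η)
  have hfinal : (1 - η * τ - 2 * η * Φmax) * Jt
      ≤ η * (regPot Φ τ q - regPot Φ τ p) := by
    have hmul : η * ((∑ i, ∑ b, (q i b - p i b) * margU u p i b)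
        - Φmax * ∑ i, KLdiv (p i) (q i)) ≤ η * (expVal q Φ - expVal p Φ) :=
      mul_le_mul_of_nonneg_left h1 hη.le
    have hreg : regPot Φ τ q - regPot Φ τ p
        = (expVal q Φ - expVal p Φ)
          + τ * ((∑ i, entropy (q i)) - (∑ i, entropy (p i))) := by
      unfold regPot; ring
    rw [hreg]
    nlinarith [hmul, h2, h3]
  rw [ge_iff_le, hJ]
  have hinv : 1 / η * η = 1 := one_div_mul_cancel hη.ne'
  have heq : (1 / η - 2 * Φmax - τ) * Jt = (1 / η) * ((1 - η * τ - 2 * η * Φmax) * Jt) := by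
    linear_combination (τ + 2 * Φmax) * Jt * hinv
  calc (1 / η - 2 * Φmax - τ) * Jt
      = (1 / η) * ((1 - η * τ - 2 * η * Φmax) * Jt) := heq
    _ ≤ (1 / η) * (η * (regPot Φ τ q - regPot Φ τ p)) :=
        mul_le_mul_of_nonneg_left hfinal (by positivity)
    _ = regPot Φ τ q - regPot Φ τ p := by
        rw [← mul_assoc, hinv, one_mul]
end
end

section
/- Assume ητ ≤ 1. Then for every t ≥ 0, QRE-gap_τ(π^(t+1)) ≤ 2τ (1−ητ)^{t+1} · max_{i∈[N]} max_{a∈𝒜} |log π_i^(0)(a) − log π_i^{⋆(0)}(a)| + 2 Σ_{s=0}^{t} (1−ητ)^{t−s} · √(J(π^(s+1), π^(s))). -/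
open Finset

noncomputable section

section Aux

private lemma sinh_le_mul_cosh {z : ℝ} (hz : 0 ≤ z) : Real.sinh z ≤ z * Real.cosh z := by
  have h : MonotoneOn (fun z : ℝ => z * Real.cosh z - Real.sinh z) (Set.Ici 0) := by
    apply monotoneOn_of_deriv_nonneg (convex_Ici 0)
    · exact ((continuous_id.mul Real.continuous_cosh).sub Real.continuous_sinh).continuousOn
    · intro x hx
      exact ((differentiableAt_id.mul (Real.differentiable_cosh x)).sub
        (Real.differentiable_sinh x)).differentiableWithinAt
    · intro x hx
      rw [interior_Ici, Set.mem_Ioi] at hx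
      have hd : HasDerivAt (fun z : ℝ => z * Real.cosh z - Real.sinh z)
          (1 * Real.cosh x + x * Real.sinh x - Real.cosh x) x :=
        ((hasDerivAt_id x).mul (Real.hasDerivAt_cosh x)).sub (Real.hasDerivAt_sinh x)
      rw [hd.deriv]
      have := Real.sinh_nonneg_iff.mpr hx.le
      nlinarith
  have h0 := h Set.self_mem_Ici hz hz
  simp only [zero_mul, Real.cosh_zero, Real.sinh_zero, sub_zero, zero_sub, neg_nonpos] at h0
  linarith [h0]

private lemma log_ge_ratio {t : ℝ} (ht : 1 ≤ t) : 2 * (t - 1) / (t + 1) ≤ Real.log t := by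
  have ht0 : 0 < t := lt_of_lt_of_le one_pos ht
  set z := Real.log t / 2 with hzdef
  have hz : 0 ≤ z := by
    have := Real.log_nonneg ht
    rw [hzdef]; linarith
  have het : Real.exp z * Real.exp z = t := by
    rw [← Real.exp_add, hzdef]
    rw [show Real.log t / 2 + Real.log t / 2 = Real.log t by ring, Real.exp_log ht0]
  have hc : 0 < Real.cosh z := Real.cosh_pos z
  have hkey : (t - 1) * Real.cosh z = (t + 1) * Real.sinh z := by
    rw [Real.sinh_eq, Real.cosh_eq, Real.exp_neg]
    have he : 0 < Real.exp z := Real.exp_pos z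
    field_simp
    nlinarith [het]
  have hs : Real.sinh z ≤ z * Real.cosh z := sinh_le_mul_cosh hz
  have h2 : (t - 1) / (t + 1) = Real.sinh z / Real.cosh z := by
    rw [div_eq_div_iff (by linarith) hc.ne']
    linarith [hkey]
  have : Real.sinh z / Real.cosh z ≤ z := by
    rw [div_le_iff₀ hc]; linarith
  have hlog : Real.log t = 2 * z := by rw [hzdef]; ring
  rw [hlog]
  rw [div_le_iff₀ (by linarith : (0:ℝ) < t + 1)]
  rw [div_le_iff₀ hc] at this
  have h3 : (t-1) * Real.cosh z ≤ z * Real.cosh z * (t+1) := by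
    rw [hkey]; nlinarith [this]
  nlinarith [h3, hc]

private lemma pt_ineq' {x y : ℝ} (hy : 0 < y) (hxy : y ≤ x) :
    2 * (x - y) ^ 2 / (x + y) ≤ (x - y) * (Real.log x - Real.log y) := by
  have hx : 0 < x := lt_of_lt_of_le hy hxy
  have ht : 1 ≤ x / y := (one_le_div hy).mpr hxy
  have h1 := log_ge_ratio ht
  have h2 : Real.log (x / y) = Real.log x - Real.log y := Real.log_div hx.ne' hy.ne'
  have h3 : 2 * (x / y - 1) / (x / y + 1) = 2 * (x - y) / (x + y) := by
    rw [div_eq_div_iff (by positivity) (by positivity)]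
    field_simp
  have h4 : 2 * (x - y) / (x + y) ≤ Real.log x - Real.log y := by
    rw [← h3, ← h2]; exact h1
  have h5 : 2 * (x - y) ^ 2 / (x + y) = (x - y) * (2 * (x - y) / (x + y)) := by
    field_simp
  rw [h5]
  exact mul_le_mul_of_nonneg_left h4 (by linarith)

private lemma pt_ineq {x y : ℝ} (hx : 0 < x) (hy : 0 < y) :
    2 * (x - y) ^ 2 / (x + y) ≤ (x - y) * (Real.log x - Real.log y) := by
  rcases le_total y x with h | h
  · exact pt_ineq' hy h
  · have := pt_ineq' hx h
    have e1 : (y - x) ^ 2 = (x - y) ^ 2 := by ring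
    have e2 : y + x = x + y := by ring
    have e3 : (y - x) * (Real.log y - Real.log x) = (x - y) * (Real.log x - Real.log y) := by ring
    rw [e1, e2, e3] at this
    exact this

lemma l1_le_sqrt_J {B : Type*} [Fintype B] (P Q : B → ℝ) (hP : ∀ b, 0 < P b)
    (hQ : ∀ b, 0 < Q b) (hP1 : ∑ b, P b = 1) (hQ1 : ∑ b, Q b = 1) :
    ∑ b, |P b - Q b| ≤ Real.sqrt (Jdiv P Q) := by
  have hJ : Jdiv P Q = ∑ b, (P b - Q b) * (Real.log (P b) - Real.log (Q b)) := by
    unfold Jdiv KLdiv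
    rw [← Finset.sum_add_distrib]
    apply Finset.sum_congr rfl
    intro b _; ring
  have hCS := Finset.sum_mul_sq_le_sq_mul_sq Finset.univ
    (fun b => |P b - Q b| * Real.sqrt (2 / (P b + Q b)))
    (fun b => Real.sqrt ((P b + Q b) / 2))
  have hfg : ∀ b : B, |P b - Q b| * Real.sqrt (2 / (P b + Q b)) * Real.sqrt ((P b + Q b) / 2)
      = |P b - Q b| := by
    intro b
    have hb : 0 < P b + Q b := by have := hP b; have := hQ b; linarith
    rw [mul_assoc, ← Real.sqrt_mul (by positivity)]
    rw [show 2 / (P b + Q b) * ((P b + Q b) / 2) = 1 by field_simp]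
    simp
  have hf2 : ∀ b : B, (|P b - Q b| * Real.sqrt (2 / (P b + Q b))) ^ 2
      = 2 * (P b - Q b) ^ 2 / (P b + Q b) := by
    intro b
    have hb : 0 < P b + Q b := by have := hP b; have := hQ b; linarith
    rw [mul_pow, sq_abs, Real.sq_sqrt (by positivity)]
    field_simp
  have hg2 : ∑ b : B, (Real.sqrt ((P b + Q b) / 2)) ^ 2 = 1 := by
    have : ∀ b : B, (Real.sqrt ((P b + Q b) / 2)) ^ 2 = (P b + Q b) / 2 := by
      intro b
      have hb : 0 < P b + Q b := by have := hP b; have := hQ b; linarith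
      rw [Real.sq_sqrt (by positivity)]
    rw [Finset.sum_congr rfl (fun b _ => this b)]
    rw [show (fun b => (P b + Q b)/2) = fun b => (P b + Q b)/2 from rfl]
    rw [← Finset.sum_div, Finset.sum_add_distrib, hP1, hQ1]
    norm_num
  simp only [hfg] at hCS
  rw [Finset.sum_congr rfl (fun b _ => hf2 b), hg2, mul_one] at hCS
  have hle : (∑ b, |P b - Q b|) ^ 2 ≤ Jdiv P Q := by
    refine hCS.trans ?_
    rw [hJ]
    apply Finset.sum_le_sum
    intro b _
    exact pt_ineq (hP b) (hQ b)
  calc ∑ b, |P b - Q b| = Real.sqrt ((∑ b, |P b - Q b|) ^ 2) := by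
        rw [Real.sqrt_sq (Finset.sum_nonneg fun b _ => abs_nonneg _)]
    _ ≤ Real.sqrt (Jdiv P Q) := Real.sqrt_le_sqrt hle

set_option linter.unusedSectionVars false
variable {N : ℕ} {A : Type*} [Fintype A] [DecidableEq A]

lemma jointPmf_update (π : Fin N → A → ℝ) (i : Fin N) (p : A → ℝ) (v : Fin N → A) :
    jointPmf (Function.update π i p) v = p (v i) * ∏ j ∈ Finset.univ.erase i, π j (v j) := by
  simp only [jointPmf]
  rw [← Finset.mul_prod_erase Finset.univ (fun j => Function.update π i p j (v j))
    (Finset.mem_univ i)]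
  congr 1
  · simp
  · exact Finset.prod_congr rfl fun j hj => by
      rw [Function.update_of_ne (Finset.ne_of_mem_erase hj)]

lemma jointPmf_point (π : Fin N → A → ℝ) (i : Fin N) (b : A) (v : Fin N → A) :
    jointPmf π (Function.update v i b) = π i b * ∏ j ∈ Finset.univ.erase i, π j (v j) := by
  simp only [jointPmf]
  rw [← Finset.mul_prod_erase Finset.univ (fun j => π j (Function.update v i b j))
    (Finset.mem_univ i)]
  congr 1
  · simp
  · exact Finset.prod_congr rfl fun j hj => by
      rw [Function.update_of_ne (Finset.ne_of_mem_erase hj)]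

lemma sum_jointPmf (π : Fin N → A → ℝ) (h : ∀ i, ∑ a, π i a = 1) :
    ∑ v : Fin N → A, jointPmf π v = 1 := by
  simp only [jointPmf]
  rw [← Fintype.piFinset_univ, ← Finset.prod_univ_sum]
  simp [h]

/-- Involution trick: summing over `v` with `v i = a` of a sum over re-updates
gives the full sum. -/
lemma sum_update_slice (i : Fin N) (a : A) (h : (Fin N → A) → ℝ) :
    ∑ v : Fin N → A, (if v i = a then ∑ b : A, h (Function.update v i b) else 0)
      = ∑ w : Fin N → A, h w := by
  have hinv : Function.Involutive
      (fun p : (Fin N → A) × A => (Function.update p.1 i p.2, p.1 i)) := by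
    intro p
    simp [Function.update_idem, Function.update_eq_self]
  set e := hinv.toPerm with he
  have hcomp := Equiv.sum_comp e
    (fun p : (Fin N → A) × A => if p.1 i = a then h (Function.update p.1 i p.2) else 0)
  have lhs_eq : ∑ v : Fin N → A, (if v i = a then ∑ b : A, h (Function.update v i b) else 0)
      = ∑ p : (Fin N → A) × A, (if p.1 i = a then h (Function.update p.1 i p.2) else 0) := by
    rw [Fintype.sum_prod_type]
    refine Finset.sum_congr rfl fun v _ => ?_
    split <;> simp
  have rhs_eq : ∑ p : (Fin N → A) × A,
      (fun p : (Fin N → A) × A => if p.1 i = a then h (Function.update p.1 i p.2) else 0) (e p)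
      = ∑ w : Fin N → A, h w := by
    have : ∀ p : (Fin N → A) × A,
        (fun p : (Fin N → A) × A => if p.1 i = a then h (Function.update p.1 i p.2) else 0) (e p)
        = if p.2 = a then h p.1 else 0 := by
      intro p
      simp only [he, Function.Involutive.coe_toPerm]
      simp [Function.update_idem, Function.update_eq_self]
    rw [Finset.sum_congr rfl fun p _ => this p]
    rw [Fintype.sum_prod_type]
    simp
  rw [lhs_eq, ← hcomp, rhs_eq]

lemma expVal_update (π : Fin N → A → ℝ) (i : Fin N) (p : A → ℝ) (f : (Fin N → A) → ℝ) :
    expVal (Function.update π i p) f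
      = ∑ a, p a * expVal (Function.update π i (pmfOf a)) f := by
  simp only [expVal, jointPmf_update]
  simp only [Finset.mul_sum]
  rw [Finset.sum_comm]
  refine Finset.sum_congr rfl fun v _ => ?_
  rw [Finset.sum_eq_single (v i) (fun b _ hb => by simp [pmfOf, Ne.symm hb])
    (fun h => absurd (Finset.mem_univ _) h)]
  simp [pmfOf]
  ring

set_option maxHeartbeats 1000000 in
lemma margU_diff_le (u : Fin N → (Fin N → A) → ℝ) (hu : ∀ i v, 0 ≤ u i v ∧ u i v ≤ 1)
    (π π' : Fin N → A → ℝ) (i : Fin N) (a : A)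
    (hπ : ∑ b, π i b = 1) (hπ' : ∑ b, π' i b = 1) :
    |margU u π i a - margU u π' i a|
      ≤ ∑ w : Fin N → A, |jointPmf π w - jointPmf π' w| := by
  have hW : ∀ v : Fin N → A, ∏ j ∈ Finset.univ.erase i, π j (v j)
      = ∑ b : A, jointPmf π (Function.update v i b) := by
    intro v
    rw [Finset.sum_congr rfl fun b _ => jointPmf_point π i b v, ← Finset.sum_mul, hπ, one_mul]
  have hW' : ∀ v : Fin N → A, ∏ j ∈ Finset.univ.erase i, π' j (v j)
      = ∑ b : A, jointPmf π' (Function.update v i b) := by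
    intro v
    rw [Finset.sum_congr rfl fun b _ => jointPmf_point π' i b v, ← Finset.sum_mul, hπ', one_mul]
  have hrepr : margU u π i a - margU u π' i a = ∑ v : Fin N → A,
      (if v i = a then (1:ℝ) else 0) *
        ((∏ j ∈ Finset.univ.erase i, π j (v j)) - ∏ j ∈ Finset.univ.erase i, π' j (v j)) * u i v := by
    simp only [margU, expVal, jointPmf_update, pmfOf, ← Finset.sum_sub_distrib]
    refine Finset.sum_congr rfl fun v _ => ?_
    ring
  rw [hrepr]
  calc _ ≤ ∑ v : Fin N → A, |(if v i = a then (1:ℝ) else 0) *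
        ((∏ j ∈ Finset.univ.erase i, π j (v j)) - ∏ j ∈ Finset.univ.erase i, π' j (v j)) * u i v| :=
      Finset.abs_sum_le_sum_abs _ _
    _ ≤ ∑ v : Fin N → A, (if v i = a then
        ∑ b : A, |jointPmf π (Function.update v i b) - jointPmf π' (Function.update v i b)| else 0) := by
      refine Finset.sum_le_sum fun v _ => ?_
      by_cases hva : v i = a
      · rw [if_pos hva, if_pos hva, abs_mul, abs_mul, abs_one, one_mul]
        have h2 : |u i v| ≤ 1 := abs_le.mpr ⟨by linarith [(hu i v).1], (hu i v).2⟩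
        have h3 : |(∏ j ∈ Finset.univ.erase i, π j (v j)) - ∏ j ∈ Finset.univ.erase i, π' j (v j)| * |u i v|
            ≤ |(∏ j ∈ Finset.univ.erase i, π j (v j)) - ∏ j ∈ Finset.univ.erase i, π' j (v j)| * 1 :=
          mul_le_mul_of_nonneg_left h2 (abs_nonneg _)
        have h4 : |(∏ j ∈ Finset.univ.erase i, π j (v j)) - ∏ j ∈ Finset.univ.erase i, π' j (v j)|
            = |∑ b : A, (jointPmf π (Function.update v i b) - jointPmf π' (Function.update v i b))| := by
          rw [hW, hW', Finset.sum_sub_distrib]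
        refine le_trans h3 ?_
        rw [mul_one, h4]
        exact Finset.abs_sum_le_sum_abs _ _
      · rw [if_neg hva, if_neg hva]
        simp
    _ = _ := sum_update_slice i a (fun w => |jointPmf π w - jointPmf π' w|)


end Aux

section Aux2
set_option linter.unusedSectionVars false
section KL
variable {A : Type*} [Fintype A]

lemma KL_nonneg (p q : A → ℝ) (hp : IsDist p) (hq0 : ∀ a, 0 < q a)
    (hq1 : ∑ a, q a = 1) : 0 ≤ KLdiv p q := by
  have key : ∀ a : A, p a * (Real.log (q a) - Real.log (p a)) ≤ q a - p a := by
    intro a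
    rcases eq_or_lt_of_le (hp.1 a) with h | h
    · rw [← h]; simpa using (hq0 a).le
    · have hlog := Real.log_le_sub_one_of_pos (div_pos (hq0 a) h)
      rw [Real.log_div (hq0 a).ne' h.ne'] at hlog
      have hqp : p a * (q a / p a) = q a := by field_simp
      nlinarith [mul_le_mul_of_nonneg_left hlog h.le]
  have hsum : ∑ a, p a * (Real.log (q a) - Real.log (p a)) ≤ ∑ a, (q a - p a) :=
    Finset.sum_le_sum fun a _ => key a
  rw [Finset.sum_sub_distrib, hq1, hp.2, sub_self] at hsum
  have : KLdiv p q = -∑ a, p a * (Real.log (q a) - Real.log (p a)) := by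
    unfold KLdiv
    rw [← Finset.sum_neg_distrib]
    exact Finset.sum_congr rfl fun a _ => by ring
  rw [this]; linarith

lemma KL_le_pairwise [Nonempty A] (p q : A → ℝ) (hp0 : ∀ a, 0 < p a)
    (hp1 : ∑ a, p a = 1) (hq0 : ∀ a, 0 < q a) (hq1 : ∑ a, q a = 1) (C : ℝ)
    (hC : ∀ a a', (Real.log (p a) - Real.log (q a)) - (Real.log (p a') - Real.log (q a')) ≤ C) :
    KLdiv p q ≤ C := by
  have h1 : 0 ≤ KLdiv q p := KL_nonneg q p ⟨fun a => (hq0 a).le, hq1⟩ hp0 hp1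
  have h2 : ∑ a, q a * (Real.log (p a) - Real.log (q a)) ≤ ∑ a : A, (0:ℝ) := by
    simp only [Finset.sum_const, smul_zero]
    have : KLdiv q p = -∑ a, q a * (Real.log (p a) - Real.log (q a)) := by
      unfold KLdiv; rw [← Finset.sum_neg_distrib]
      exact Finset.sum_congr rfl fun a _ => by ring
    rw [this] at h1; linarith
  obtain ⟨a', -, ha'⟩ := Finset.exists_le_of_sum_le Finset.univ_nonempty h2
  have hD' : Real.log (p a') - Real.log (q a') ≤ 0 := by
    by_contra hcon
    push_neg at hcon
    nlinarith [hq0 a']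
  calc KLdiv p q = ∑ a, p a * (Real.log (p a) - Real.log (q a)) := rfl
    _ ≤ ∑ a, p a * C := Finset.sum_le_sum fun a _ => by
        have := hC a a'
        have hDa : Real.log (p a) - Real.log (q a) ≤ C := by linarith
        exact mul_le_mul_of_nonneg_left hDa (hp0 a).le
    _ = C := by rw [← Finset.sum_mul, hp1, one_mul]
end KL

section BR
variable {N : ℕ} {A : Type*} [Fintype A] [DecidableEq A] [Nonempty A]
variable (u : Fin N → (Fin N → A) → ℝ) (τ : ℝ) (π : Fin N → A → ℝ) (i : Fin N)

lemma bestResp_pos : ∀ a, 0 < bestResp u τ π i a := fun a =>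
  div_pos (Real.exp_pos _) (Finset.sum_pos (fun a' _ => Real.exp_pos _) Finset.univ_nonempty)

lemma bestResp_sum : ∑ a, bestResp u τ π i a = 1 := by
  unfold bestResp
  rw [← Finset.sum_div, div_self
    (Finset.sum_pos (fun a' _ => Real.exp_pos _) Finset.univ_nonempty).ne']

lemma log_bestResp (a : A) : Real.log (bestResp u τ π i a)
    = margU u π i a / τ - Real.log (∑ a', Real.exp (margU u π i a' / τ)) := by
  unfold bestResp
  rw [Real.log_div (Real.exp_ne_zero _)
    (Finset.sum_pos (fun a' _ => Real.exp_pos _) Finset.univ_nonempty).ne', Real.log_exp]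

lemma weighted_id (hτ : 0 < τ) (w : A → ℝ) (hw : ∑ a, w a = 1) :
    ∑ a, w a * margU u π i a - τ * ∑ a, w a * Real.log (w a)
      = τ * Real.log (∑ a', Real.exp (margU u π i a' / τ))
        - τ * KLdiv w (bestResp u τ π i) := by
  have hKL : KLdiv w (bestResp u τ π i)
      = ∑ a, (w a * Real.log (w a) - w a * margU u π i a / τ
          + w a * Real.log (∑ a', Real.exp (margU u π i a' / τ))) := by
    unfold KLdiv
    exact Finset.sum_congr rfl fun a _ => by rw [log_bestResp u τ π i a]; ring
  rw [hKL, Finset.sum_add_distrib, Finset.sum_sub_distrib, ← Finset.sum_mul, hw, one_mul]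
  have h1 : ∑ a, w a * margU u π i a / τ = (∑ a, w a * margU u π i a) / τ := by
    rw [← Finset.sum_div]
  rw [h1]
  field_simp
  ring

lemma gap_le_KL (hτ : 0 < τ) (hπi : IsDist (π i)) (p : A → ℝ) (hp : IsDist p) :
    uReg u τ i (Function.update π i p) - uReg u τ i π
      ≤ τ * KLdiv (π i) (bestResp u τ π i) := by
  have hform : ∀ w : A → ℝ, ∑ a, w a = 1 →
      uReg u τ i (Function.update π i w)
        = τ * Real.log (∑ a', Real.exp (margU u π i a' / τ))
          - τ * KLdiv w (bestResp u τ π i) := by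
    intro w hw
    have : uReg u τ i (Function.update π i w)
        = ∑ a, w a * margU u π i a - τ * ∑ a, w a * Real.log (w a) := by
      unfold uReg entropy
      rw [expVal_update, Function.update_self]
      simp only [margU]
      ring
    rw [this, weighted_id u τ π i hτ w hw]
  have h1 := hform p hp.2
  have h2 := hform (π i) hπi.2
  rw [Function.update_eq_self] at h2
  have h3 : 0 ≤ KLdiv p (bestResp u τ π i) :=
    KL_nonneg p _ hp (bestResp_pos u τ π i) (bestResp_sum u τ π i)
  rw [h1, h2]
  nlinarith
end BR
end Aux2


/-- Per-iterate bound on the QRE-gap along the NPG trajectory. -/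
theorem QREgap_iterate_bound
    {N : ℕ} (hN : 0 < N) {A : Type*} [Fintype A] [DecidableEq A] [Nonempty A]
    (u : Fin N → (Fin N → A) → ℝ) (hu : ∀ i a, 0 ≤ u i a ∧ u i a ≤ 1)
    (τ η : ℝ) (hτ : 0 < τ) (hη : 0 < η) (hητ : η * τ ≤ 1)
    (π : ℕ → Fin N → A → ℝ)
    (hdist : ∀ i, IsDist (π 0 i)) (hpos : ∀ i a, 0 < π 0 i a)
    (hstep : NPGstep u τ η π) :
    ∀ t : ℕ,
      QREgap u τ (π (t + 1)) ≤
        2 * τ * (1 - η * τ) ^ (t + 1) *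
            (⨆ i : Fin N, ⨆ a : A,
              |Real.log (π 0 i a) - Real.log (bestResp u τ (π 0) i a)|) +
          2 * ∑ s ∈ Finset.range (t + 1), (1 - η * τ) ^ (t - s) *
            Real.sqrt (Jdiv (jointPmf (π (s + 1))) (jointPmf (π s))) := by
  haveI : Nonempty (Fin N) := ⟨⟨0, hN⟩⟩
  set α : ℝ := 1 - η * τ with hα
  have hα0 : 0 ≤ α := by rw [hα]; linarith
  -- trajectory facts
  have traj : ∀ t : ℕ, (∀ i a, 0 < π t i a) ∧ (∀ i, ∑ a, π t i a = 1) := by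
    intro t
    induction t with
    | zero => exact ⟨hpos, fun i => (hdist i).2⟩
    | succ t ih =>
      have hfpos : ∀ i a, 0 < π t i a ^ (1 - η * τ) * Real.exp (η * margU u (π t) i a) :=
        fun i a => mul_pos (Real.rpow_pos_of_pos (ih.1 i a) _) (Real.exp_pos _)
      have hZ : ∀ i, 0 < ∑ a', π t i a' ^ (1 - η * τ) * Real.exp (η * margU u (π t) i a') :=
        fun i => Finset.sum_pos (fun a _ => hfpos i a) Finset.univ_nonempty
      refine ⟨fun i a => ?_, fun i => ?_⟩
      · rw [hstep t i a]; exact div_pos (hfpos i a) (hZ i)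
      · rw [Finset.sum_congr rfl fun a _ => hstep t i a, ← Finset.sum_div, div_self (hZ i).ne']
  -- log of the NPG update
  have hlog : ∀ t i a, Real.log (π (t+1) i a)
      = α * Real.log (π t i a) + η * margU u (π t) i a
        - Real.log (∑ a', π t i a' ^ (1 - η * τ) * Real.exp (η * margU u (π t) i a')) := by
    intro t i a
    have hp := (traj t).1 i a
    have hZ : 0 < ∑ a', π t i a' ^ (1 - η * τ) * Real.exp (η * margU u (π t) i a') :=
      Finset.sum_pos (fun a' _ => mul_pos (Real.rpow_pos_of_pos ((traj t).1 i a') _)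
        (Real.exp_pos _)) Finset.univ_nonempty
    rw [hstep t i a, Real.log_div (mul_pos (Real.rpow_pos_of_pos hp _)
      (Real.exp_pos _)).ne' hZ.ne', Real.log_mul (Real.rpow_pos_of_pos hp _).ne'
      (Real.exp_ne_zero _), Real.log_rpow hp, Real.log_exp, hα]
  -- difference to log best response
  set D : ℕ → Fin N → A → ℝ := fun t i a =>
    Real.log (π t i a) - Real.log (bestResp u τ (π t) i a) with hD
  set S : ℝ := ⨆ i : Fin N, ⨆ a : A,
      |Real.log (π 0 i a) - Real.log (bestResp u τ (π 0) i a)| with hS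
  set J : ℕ → ℝ := fun s => Jdiv (jointPmf (π (s + 1))) (jointPmf (π s)) with hJ
  -- margU difference bound
  have hmb : ∀ t i a, |margU u (π t) i a - margU u (π (t+1)) i a| ≤ Real.sqrt (J t) := by
    intro t i a
    have h1 := margU_diff_le u hu (π t) (π (t+1)) i a ((traj t).2 i) ((traj (t+1)).2 i)
    have h2 : ∑ w : Fin N → A, |jointPmf (π t) w - jointPmf (π (t+1)) w|
        = ∑ w : Fin N → A, |jointPmf (π (t+1)) w - jointPmf (π t) w| :=
      Finset.sum_congr rfl fun w _ => abs_sub_comm _ _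
    have h3 : ∑ w : Fin N → A, |jointPmf (π (t+1)) w - jointPmf (π t) w|
        ≤ Real.sqrt (J t) := by
      refine l1_le_sqrt_J _ _ (fun w => ?_) (fun w => ?_)
        (sum_jointPmf _ (traj (t+1)).2) (sum_jointPmf _ (traj t).2)
      · exact Finset.prod_pos fun j _ => (traj (t+1)).1 j (w j)
      · exact Finset.prod_pos fun j _ => (traj t).1 j (w j)
    calc _ ≤ _ := h1
      _ = _ := h2
      _ ≤ _ := h3
  -- pairwise recursion identity
  have hrec : ∀ t i a a', D (t+1) i a - D (t+1) i a'
      = α * (D t i a - D t i a')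
        + ((margU u (π t) i a - margU u (π (t+1)) i a)
          - (margU u (π t) i a' - margU u (π (t+1)) i a')) / τ := by
    intro t i a a'
    simp only [hD]
    rw [hlog t i a, hlog t i a', log_bestResp u τ (π (t+1)) i a,
      log_bestResp u τ (π (t+1)) i a', log_bestResp u τ (π t) i a, log_bestResp u τ (π t) i a']
    have hτ' : τ ≠ 0 := hτ.ne'
    field_simp
    ring
  -- the induction claim
  have claim : ∀ t i a a', D t i a - D t i a'
      ≤ α ^ t * (2 * S) + (2/τ) * ∑ s ∈ Finset.range t, α ^ (t - 1 - s) * Real.sqrt (J s) := by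
    intro t
    induction t with
    | zero =>
      intro i a a'
      simp only [pow_zero, one_mul, Finset.range_zero, Finset.sum_empty, mul_zero, add_zero]
      have hb : ∀ i a, |D 0 i a| ≤ S := by
        intro i a
        have h1 : |D 0 i a| ≤ ⨆ a : A, |D 0 i a| :=
          le_ciSup (f := fun a : A => |D 0 i a|) (Set.Finite.bddAbove (Set.finite_range _)) a
        have h2 : (⨆ a : A, |D 0 i a|) ≤ S := by
          rw [hS]
          exact le_ciSup (Set.Finite.bddAbove (Set.finite_range
            (fun i => ⨆ a : A, |Real.log (π 0 i a) - Real.log (bestResp u τ (π 0) i a)|))) i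
        exact h1.trans h2
      have := hb i a
      have := hb i a'
      have h3 := abs_le.mp (hb i a)
      have h4 := abs_le.mp (hb i a')
      linarith [h3.2, h4.1]
    | succ t ih =>
      intro i a a'
      rw [hrec t i a a']
      have e1 : α * (D t i a - D t i a')
          ≤ α * (α ^ t * (2 * S) + (2/τ) * ∑ s ∈ Finset.range t, α ^ (t - 1 - s) * Real.sqrt (J s)) :=
        mul_le_mul_of_nonneg_left (ih i a a') hα0
      have e2 : ((margU u (π t) i a - margU u (π (t+1)) i a)
          - (margU u (π t) i a' - margU u (π (t+1)) i a')) / τ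
          ≤ (2/τ) * Real.sqrt (J t) := by
        have b1 := abs_le.mp (hmb t i a)
        have b2 := abs_le.mp (hmb t i a')
        rw [div_le_iff₀ hτ]
        have : (2/τ) * Real.sqrt (J t) * τ = 2 * Real.sqrt (J t) := by field_simp
        rw [this]
        linarith [b1.2, b2.1]
      have hsum : ∑ s ∈ Finset.range (t+1), α ^ (t + 1 - 1 - s) * Real.sqrt (J s)
          = α * ∑ s ∈ Finset.range t, α ^ (t - 1 - s) * Real.sqrt (J s) + Real.sqrt (J t) := by
        simp only [Nat.add_sub_cancel]
        rw [Finset.sum_range_succ, Nat.sub_self, pow_zero, one_mul, Finset.mul_sum]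
        congr 1
        refine Finset.sum_congr rfl fun s hs => ?_
        have hst : s < t := Finset.mem_range.mp hs
        have he : t - s = (t - 1 - s) + 1 := by omega
        rw [he, pow_succ]
        ring
      have goal_eq : α ^ (t+1) * (2 * S)
          + (2/τ) * ∑ s ∈ Finset.range (t+1), α ^ (t + 1 - 1 - s) * Real.sqrt (J s)
          = α * (α ^ t * (2 * S) + (2/τ) * ∑ s ∈ Finset.range t, α ^ (t - 1 - s) * Real.sqrt (J s))
            + (2/τ) * Real.sqrt (J t) := by
        rw [hsum, pow_succ]
        ring
      rw [goal_eq]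
      exact add_le_add e1 e2
  -- conclude
  intro t
  have hd1 : IsDist (π (t+1) ⟨0, hN⟩) := ⟨fun a => ((traj (t+1)).1 _ a).le, (traj (t+1)).2 _⟩
  have hne : {x | ∃ (i : Fin N) (p : A → ℝ), IsDist p ∧
      x = uReg u τ i (Function.update (π (t+1)) i p) - uReg u τ i (π (t+1))}.Nonempty := by
    refine ⟨0, ⟨0, hN⟩, π (t+1) ⟨0, hN⟩, hd1, ?_⟩
    rw [Function.update_eq_self, sub_self]
  refine csSup_le hne ?_
  rintro x ⟨i, p, hp, rfl⟩
  have hd2 : IsDist (π (t+1) i) := ⟨fun a => ((traj (t+1)).1 i a).le, (traj (t+1)).2 i⟩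
  have step1 : uReg u τ i (Function.update (π (t+1)) i p) - uReg u τ i (π (t+1))
      ≤ τ * KLdiv (π (t+1) i) (bestResp u τ (π (t+1)) i) :=
    gap_le_KL u τ (π (t+1)) i hτ hd2 p hp
  have step2 : KLdiv (π (t+1) i) (bestResp u τ (π (t+1)) i)
      ≤ α ^ (t+1) * (2 * S) + (2/τ) * ∑ s ∈ Finset.range (t+1), α ^ (t + 1 - 1 - s) * Real.sqrt (J s) := by
    refine KL_le_pairwise _ _ (fun a => (traj (t+1)).1 i a) ((traj (t+1)).2 i)
      (bestResp_pos u τ (π (t+1)) i) (bestResp_sum u τ (π (t+1)) i) _ ?_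
    intro a a'
    exact claim (t+1) i a a'
  have step3 : τ * KLdiv (π (t+1) i) (bestResp u τ (π (t+1)) i)
      ≤ τ * (α ^ (t+1) * (2 * S) + (2/τ) * ∑ s ∈ Finset.range (t+1), α ^ (t + 1 - 1 - s) * Real.sqrt (J s)) :=
    mul_le_mul_of_nonneg_left step2 hτ.le
  refine (step1.trans step3).trans (le_of_eq ?_)
  simp only [Nat.add_sub_cancel]
  have h5 : τ * (2/τ) = 2 := by field_simp
  rw [mul_add, ← mul_assoc τ (2/τ), h5]
  simp only [hJ]
  ring
end
end
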